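/- Let Pa_n denote the path graph on n vertices with Laplacian eigenvalues {−2 + 2cos(πk/(n−1)) : k = 0,...,n−1}. Fix t > 0. Then lim_{n→∞} Σ_{k=0}^{n−1} (exp(t(−2 + 2cos(πk/n))) − exp(t(−2 + 2cos(πk/(n+1)))))² = 0. -/

import Mathlib

open Real Filter Finset

lemma exp_lip_nonpos {a b : ℝ} (ha : a ≤ 0) (hb : b ≤ 0) :
    |Real.exp a - Real.exp b| ≤ |a - b| := by
  wlog h : b ≤ a generalizing a b
  · rw [abs_sub_comm, abs_sub_comm a b]
    exact this hb ha (le_of_not_ge h)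
  rw [abs_of_nonneg (sub_nonneg.2 (Real.exp_le_exp.2 h)), abs_of_nonneg (sub_nonneg.2 h)]
  have h1 : Real.exp b = Real.exp a * Real.exp (b - a) := by
    rw [← Real.exp_add]; ring_nf
  have h2 : (b - a) + 1 ≤ Real.exp (b - a) := Real.add_one_le_exp _
  have h3 : Real.exp a ≤ 1 := Real.exp_le_one_iff.2 ha
  have h4 : 0 < Real.exp a := Real.exp_pos a
  nlinarith [mul_nonneg (sub_nonneg.2 h) (sub_nonneg.2 h3)]

lemma cos_lip (x y : ℝ) : |Real.cos x - Real.cos y| ≤ |x - y| := by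
  rw [Real.cos_sub_cos]
  have h1 : |Real.sin ((x + y) / 2)| ≤ 1 := abs_le.2 ⟨Real.neg_one_le_sin _, Real.sin_le_one _⟩
  have h2 : |Real.sin ((x - y) / 2)| ≤ |(x - y) / 2| := Real.abs_sin_le_abs
  have h3 : |(x - y) / 2| = |x - y| / 2 := by rw [abs_div]; norm_num
  rw [abs_mul, abs_mul]
  have : |(-2 : ℝ)| = 2 := by norm_num
  rw [this]
  nlinarith [abs_nonneg (Real.sin ((x + y) / 2)), abs_nonneg (Real.sin ((x - y) / 2)),
    abs_nonneg (x - y)]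

theorem path_graph_distance_limit (t : ℝ) (ht : 0 < t) :
    Tendsto (fun n : ℕ =>
      ∑ k ∈ Finset.range n,
        (Real.exp (t * (-2 + 2 * Real.cos (Real.pi * k / n))) -
          Real.exp (t * (-2 + 2 * Real.cos (Real.pi * k / (n + 1))))) ^ 2)
      atTop (nhds 0) := by
  have hg : Tendsto (fun n : ℕ => (2 * t * Real.pi) ^ 2 / n) atTop (nhds 0) :=
    tendsto_const_div_atTop_nhds_zero_nat _
  apply squeeze_zero' (g := fun n : ℕ => (2 * t * Real.pi) ^ 2 / n)
  · filter_upwards with n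
    exact Finset.sum_nonneg fun k _ => sq_nonneg _
  · filter_upwards [eventually_ge_atTop 1] with n hn
    set N : ℝ := (n : ℝ) with hNdef
    have hN1 : (1 : ℝ) ≤ N := by rw [hNdef]; exact_mod_cast hn
    have hN0 : (0 : ℝ) < N := by linarith
    have hN0' : (0 : ℝ) ≤ N := le_of_lt hN0
    have key : ∀ k ∈ Finset.range n,
        (Real.exp (t * (-2 + 2 * Real.cos (Real.pi * k / n))) -
          Real.exp (t * (-2 + 2 * Real.cos (Real.pi * k / (n + 1))))) ^ 2
          ≤ (2 * t * Real.pi / N) ^ 2 := by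
      intro k hk
      have hkN : (k : ℝ) ≤ N := by
        rw [hNdef]
        exact_mod_cast le_of_lt (Finset.mem_range.1 hk)
      have hk0 : (0 : ℝ) ≤ (k : ℝ) := Nat.cast_nonneg k
      set x : ℝ := Real.pi * k / N
      set y : ℝ := Real.pi * k / (N + 1)
      have ha : t * (-2 + 2 * Real.cos x) ≤ 0 :=
        mul_nonpos_of_nonneg_of_nonpos (le_of_lt ht) (by nlinarith [Real.cos_le_one x])
      have hb : t * (-2 + 2 * Real.cos y) ≤ 0 :=
        mul_nonpos_of_nonneg_of_nonpos (le_of_lt ht) (by nlinarith [Real.cos_le_one y])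
      have hxy : |x - y| ≤ Real.pi / N := by
        have hxy0 : x - y = Real.pi * k / (N * (N + 1)) := by
          simp only [x, y]
          rw [div_sub_div _ _ (ne_of_gt hN0) (by positivity)]
          ring
        have hnonneg : 0 ≤ x - y := by
          rw [hxy0]
          positivity
        rw [abs_of_nonneg hnonneg, hxy0, div_le_div_iff₀ (by positivity) hN0]
        have hcert : 0 ≤ Real.pi * N * (N + 1 - k) :=
          mul_nonneg (mul_nonneg (le_of_lt Real.pi_pos) hN0') (by linarith)
        nlinarith [hcert]
      have habs : |Real.exp (t * (-2 + 2 * Real.cos x)) -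
          Real.exp (t * (-2 + 2 * Real.cos y))| ≤ 2 * t * Real.pi / N := by
        calc |Real.exp (t * (-2 + 2 * Real.cos x)) - Real.exp (t * (-2 + 2 * Real.cos y))|
            ≤ |t * (-2 + 2 * Real.cos x) - t * (-2 + 2 * Real.cos y)| := exp_lip_nonpos ha hb
          _ = 2 * t * |Real.cos x - Real.cos y| := by
              rw [show t * (-2 + 2 * Real.cos x) - t * (-2 + 2 * Real.cos y)
                  = 2 * t * (Real.cos x - Real.cos y) by ring, abs_mul,
                abs_of_nonneg (by linarith : (0:ℝ) ≤ 2 * t)]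
          _ ≤ 2 * t * |x - y| := by
              have := cos_lip x y
              nlinarith
          _ ≤ 2 * t * (Real.pi / N) := by nlinarith
          _ = 2 * t * Real.pi / N := by ring
      have := pow_le_pow_left₀ (abs_nonneg _) habs 2
      rwa [sq_abs] at this
    calc ∑ k ∈ Finset.range n,
          (Real.exp (t * (-2 + 2 * Real.cos (Real.pi * k / n))) -
            Real.exp (t * (-2 + 2 * Real.cos (Real.pi * k / (n + 1))))) ^ 2
        ≤ ∑ _k ∈ Finset.range n, (2 * t * Real.pi / N) ^ 2 := Finset.sum_le_sum key
      _ = n * (2 * t * Real.pi / N) ^ 2 := by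
          rw [Finset.sum_const, Finset.card_range, nsmul_eq_mul]
      _ = (2 * t * Real.pi) ^ 2 / N := by
          rw [div_pow]
          field_simp
          ring
  · exact hg
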